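/- Let φ : A(Γ₀) → A(Γ₁) be the group homomorphism determined by sending the generator q to the product ef and sending each of the generators a, b, c, d, g, h to the generator of the same name. Then φ is well-defined and injective; in particular A(Γ₀) embeds into A(Γ₁). -/

import Mathlib

open scoped commutatorElement

/-- The defining relators of the right-angled Artin group on a simple graph `G`:
the commutators of the generators corresponding to adjacent vertices. -/
def raagRels {V : Type*} (G : SimpleGraph V) : Set (FreeGroup V) :=
  {r | ∃ u v : V, G.Adj u v ∧ r = ⁅FreeGroup.of u, FreeGroup.of v⁆}

/-- The right-angled Artin group on a simple graph `G`. -/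
abbrev RAAG {V : Type*} (G : SimpleGraph V) : Type _ := PresentedGroup (raagRels G)

/-- The generator of the right-angled Artin group corresponding to a vertex. -/
def gen {V : Type*} (G : SimpleGraph V) (v : V) : RAAG G := PresentedGroup.of v

/-- Vertices of the graph Γ₀. -/
inductive V0 : Type | a | b | c | d | q | g | h
deriving DecidableEq

/-- The graph Γ₀ with edges ab, bc, cd, da, qa, qb, qc, qd, ga, gb, gc, ha, hb, hd. -/
def G0 : SimpleGraph V0 := SimpleGraph.fromRel (fun u v => (u, v) ∈
  ([(.a,.b),(.b,.c),(.c,.d),(.d,.a),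
    (.q,.a),(.q,.b),(.q,.c),(.q,.d),
    (.g,.a),(.g,.b),(.g,.c),
    (.h,.a),(.h,.b),(.h,.d)] : List (V0 × V0)))

/-- Vertices of the graph Γ₁. -/
inductive V1 : Type | a | b | c | d | e | f | g | h
deriving DecidableEq

/-- The graph Γ₁ with edges ab, bc, cd, da, ea, eb, ec, ed, fa, fb, fc, fd, ef,
ga, gb, gc, ge, ha, hb, hd, hf. -/
def G1 : SimpleGraph V1 := SimpleGraph.fromRel (fun u v => (u, v) ∈
  ([(.a,.b),(.b,.c),(.c,.d),(.d,.a),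
    (.e,.a),(.e,.b),(.e,.c),(.e,.d),
    (.f,.a),(.f,.b),(.f,.c),(.f,.d),(.e,.f),
    (.g,.a),(.g,.b),(.g,.c),(.g,.e),
    (.h,.a),(.h,.b),(.h,.d),(.h,.f)] : List (V1 × V1)))

/- ### Auxiliary material for the proof -/

namespace RaagEmbAux

/-- Generators of adjacent vertices commute in a RAAG. -/
lemma gen_comm {V : Type*} {G : SimpleGraph V} {u v : V} (h : G.Adj u v) :
    Commute (gen G u) (gen G v) := by
  have h1 : PresentedGroup.mk (raagRels G) ⁅FreeGroup.of u, FreeGroup.of v⁆ = 1 := by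
    refine (QuotientGroup.eq_one_iff _).2 ?_
    exact Subgroup.subset_normalClosure ⟨u, v, h, rfl⟩
  rw [map_commutatorElement] at h1
  exact commutatorElement_eq_one_iff_commute.mp h1

/-- Universal property of RAAGs. -/
def raagLift {V H : Type*} [Group H] {G : SimpleGraph V} (f : V → H)
    (hf : ∀ u v, G.Adj u v → Commute (f u) (f v)) : RAAG G →* H :=
  PresentedGroup.toGroup (f := f) (by
    rintro r ⟨u, v, huv, rfl⟩
    rw [map_commutatorElement, FreeGroup.lift_apply_of, FreeGroup.lift_apply_of]
    exact commutatorElement_eq_one_iff_commute.mpr (hf u v huv))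

@[simp] lemma raagLift_of {V H : Type*} [Group H] {G : SimpleGraph V} (f : V → H)
    (hf : ∀ u v, G.Adj u v → Commute (f u) (f v)) (v : V) :
    raagLift f hf (PresentedGroup.of v) = f v :=
  PresentedGroup.toGroup.of _

@[simp] lemma raagLift_gen {V H : Type*} [Group H] {G : SimpleGraph V} (f : V → H)
    (hf : ∀ u v, G.Adj u v → Commute (f u) (f v)) (v : V) :
    raagLift f hf (gen G v) = f v :=
  PresentedGroup.toGroup.of _

lemma G0_adj (u v : V0) : G0.Adj u v ↔ u ≠ v ∧ ((u, v) ∈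
  ([(.a,.b),(.b,.c),(.c,.d),(.d,.a),
    (.q,.a),(.q,.b),(.q,.c),(.q,.d),
    (.g,.a),(.g,.b),(.g,.c),
    (.h,.a),(.h,.b),(.h,.d)] : List (V0 × V0)) ∨ (v, u) ∈
  ([(.a,.b),(.b,.c),(.c,.d),(.d,.a),
    (.q,.a),(.q,.b),(.q,.c),(.q,.d),
    (.g,.a),(.g,.b),(.g,.c),
    (.h,.a),(.h,.b),(.h,.d)] : List (V0 × V0))) :=
  SimpleGraph.fromRel_adj _ u v

lemma G1_adj (u v : V1) : G1.Adj u v ↔ u ≠ v ∧ ((u, v) ∈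
  ([(.a,.b),(.b,.c),(.c,.d),(.d,.a),
    (.e,.a),(.e,.b),(.e,.c),(.e,.d),
    (.f,.a),(.f,.b),(.f,.c),(.f,.d),(.e,.f),
    (.g,.a),(.g,.b),(.g,.c),(.g,.e),
    (.h,.a),(.h,.b),(.h,.d),(.h,.f)] : List (V1 × V1)) ∨ (v, u) ∈
  ([(.a,.b),(.b,.c),(.c,.d),(.d,.a),
    (.e,.a),(.e,.b),(.e,.c),(.e,.d),
    (.f,.a),(.f,.b),(.f,.c),(.f,.d),(.e,.f),
    (.g,.a),(.g,.b),(.g,.c),(.g,.e),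
    (.h,.a),(.h,.b),(.h,.d),(.h,.f)] : List (V1 × V1))) :=
  SimpleGraph.fromRel_adj _ u v

/-- Commutation of G0-generators, packaged for `decide`-discharge. -/
lemma C0 (u v : V0) (h : G0.Adj u v) : Commute (gen G0 u) (gen G0 v) := gen_comm h

lemma C1 (u v : V1) (h : G1.Adj u v) : Commute (gen G1 u) (gen G1 v) := gen_comm h

/- ### The map φ : A(Γ₀) → A(Γ₁) -/

def f01 : V0 → RAAG G1
  | .a => gen G1 .a
  | .b => gen G1 .b
  | .c => gen G1 .c
  | .d => gen G1 .d
  | .q => gen G1 .e * gen G1 .f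
  | .g => gen G1 .g
  | .h => gen G1 .h

lemma hf01 : ∀ u v, G0.Adj u v → Commute (f01 u) (f01 v) := by
  intro u v h
  rw [G0_adj] at h
  cases u <;> cases v <;> simp only [f01] <;>
    first
      | (exfalso; revert h; decide)
      | exact C1 _ _ ((G1_adj _ _).mpr (by decide))
      | exact Commute.mul_left (C1 _ _ ((G1_adj _ _).mpr (by decide)))
          (C1 _ _ ((G1_adj _ _).mpr (by decide)))
      | exact Commute.mul_right (C1 _ _ ((G1_adj _ _).mpr (by decide)))
          (C1 _ _ ((G1_adj _ _).mpr (by decide)))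

def φ₀ : RAAG G0 →* RAAG G1 := raagLift f01 hf01

/- ### The partial-conjugation automorphism α of A(Γ₀): h ↦ q h q⁻¹ -/

def fα : V0 → RAAG G0
  | .h => gen G0 .q * gen G0 .h * (gen G0 .q)⁻¹
  | x => gen G0 x

def fβ : V0 → RAAG G0
  | .h => (gen G0 .q)⁻¹ * gen G0 .h * gen G0 .q
  | x => gen G0 x

lemma hfα : ∀ u v, G0.Adj u v → Commute (fα u) (fα v) := by
  intro u v h
  rw [G0_adj] at h
  cases u <;> cases v <;> simp only [fα] <;>
    first
      | (exfalso; revert h; decide)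
      | exact C0 _ _ ((G0_adj _ _).mpr (by decide))
      | exact Commute.mul_left (Commute.mul_left (C0 _ _ ((G0_adj _ _).mpr (by decide)))
          (C0 _ _ ((G0_adj _ _).mpr (by decide))))
          (Commute.inv_left (C0 _ _ ((G0_adj _ _).mpr (by decide))))
      | exact Commute.mul_right (Commute.mul_right (C0 _ _ ((G0_adj _ _).mpr (by decide)))
          (C0 _ _ ((G0_adj _ _).mpr (by decide))))
          (Commute.inv_right (C0 _ _ ((G0_adj _ _).mpr (by decide))))

lemma hfβ : ∀ u v, G0.Adj u v → Commute (fβ u) (fβ v) := by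
  intro u v h
  rw [G0_adj] at h
  cases u <;> cases v <;> simp only [fβ] <;>
    first
      | (exfalso; revert h; decide)
      | exact C0 _ _ ((G0_adj _ _).mpr (by decide))
      | exact Commute.mul_left (Commute.mul_left
          (Commute.inv_left (C0 _ _ ((G0_adj _ _).mpr (by decide))))
          (C0 _ _ ((G0_adj _ _).mpr (by decide))))
          (C0 _ _ ((G0_adj _ _).mpr (by decide)))
      | exact Commute.mul_right (Commute.mul_right
          (Commute.inv_right (C0 _ _ ((G0_adj _ _).mpr (by decide))))
          (C0 _ _ ((G0_adj _ _).mpr (by decide))))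
          (C0 _ _ ((G0_adj _ _).mpr (by decide)))

def α0 : RAAG G0 →* RAAG G0 := raagLift fα hfα
def β0 : RAAG G0 →* RAAG G0 := raagLift fβ hfβ

lemma βα : β0.comp α0 = MonoidHom.id (RAAG G0) := by
  ext x
  cases x <;>
    simp [α0, β0, fα, fβ, gen, map_mul, map_inv] <;> group

lemma αβ : α0.comp β0 = MonoidHom.id (RAAG G0) := by
  ext x
  cases x <;>
    simp [α0, β0, fα, fβ, gen, map_mul, map_inv] <;> group

def α : MulAut (RAAG G0) := MonoidHom.toMulEquiv α0 β0 βα αβ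

lemma α_apply (x : RAAG G0) : α x = α0 x := rfl
lemma α_symm_apply (x : RAAG G0) : α.symm x = β0 x := rfl

/- ### The semidirect product K = A(Γ₀) ⋊ ℤ -/

def act : Multiplicative ℤ →* MulAut (RAAG G0) := zpowersHom _ α

abbrev K : Type _ := SemidirectProduct (RAAG G0) (Multiplicative ℤ) act

def t : Multiplicative ℤ := Multiplicative.ofAdd 1

@[simp] lemma act_t (x : RAAG G0) : act t x = α0 x := by
  show (α ^ (1 : ℤ)) x = α0 x
  rw [zpow_one]; rfl

@[simp] lemma act_t_inv (x : RAAG G0) : act t⁻¹ x = β0 x := by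
  show (α ^ ((-1 : ℤ)) ) x = β0 x
  rw [zpow_neg_one]; rfl

/- ### The map ψ : A(Γ₁) → K -/

def f1K : V1 → K
  | .a => SemidirectProduct.inl (gen G0 .a)
  | .b => SemidirectProduct.inl (gen G0 .b)
  | .c => SemidirectProduct.inl (gen G0 .c)
  | .d => SemidirectProduct.inl (gen G0 .d)
  | .g => SemidirectProduct.inl (gen G0 .g)
  | .h => SemidirectProduct.inl (gen G0 .h)
  | .e => SemidirectProduct.inr t
  | .f => ⟨gen G0 .q, t⁻¹⟩

lemma α0_gen (v : V0) : α0 (gen G0 v) = fα v := raagLift_gen _ _ _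
lemma β0_gen (v : V0) : β0 (gen G0 v) = fβ v := raagLift_gen _ _ _

@[simp] lemma act_t_inv' (x : RAAG G0) : (act t)⁻¹ x = β0 x := act_t_inv x

@[simp] lemma act_t_zpow_neg_one (x : RAAG G0) : (act t ^ (-1 : ℤ)) x = β0 x := by
  rw [zpow_neg_one]; exact act_t_inv x

@[simp] lemma act_t_symm (x : RAAG G0) : (act t).symm x = β0 x := act_t_inv x

lemma hf1K : ∀ u v, G1.Adj u v → Commute (f1K u) (f1K v) := by
  intro u v h
  rw [G1_adj] at h
  cases u <;> cases v <;> simp only [f1K] <;>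
    first
      | (exfalso; revert h; decide)
      | exact Commute.map (C0 _ _ ((G0_adj _ _).mpr (by decide))) SemidirectProduct.inl
      | (refine SemidirectProduct.ext ?_ ?_ <;>
          simp [SemidirectProduct.mul_left, SemidirectProduct.mul_right,
            α0_gen, β0_gen, fα, fβ] <;>
          first
            | exact (C0 _ _ ((G0_adj _ _).mpr (by decide))).eq
            | group)

def ψ : RAAG G1 →* K := raagLift f1K hf1K

end RaagEmbAux

/-- There is a (well-defined) group homomorphism `φ : A(Γ₀) → A(Γ₁)` sending the
generator `q` to the product `ef` and every other generator to the generator of the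
same name, and `φ` is injective. -/
theorem raag_G0_embeds_in_raag_G1 :
    ∃ φ : RAAG G0 →* RAAG G1,
      φ (gen G0 V0.q) = gen G1 V1.e * gen G1 V1.f ∧
      φ (gen G0 V0.a) = gen G1 V1.a ∧
      φ (gen G0 V0.b) = gen G1 V1.b ∧
      φ (gen G0 V0.c) = gen G1 V1.c ∧
      φ (gen G0 V0.d) = gen G1 V1.d ∧
      φ (gen G0 V0.g) = gen G1 V1.g ∧
      φ (gen G0 V0.h) = gen G1 V1.h ∧
      Function.Injective φ := by
  classical
  open RaagEmbAux in
  refine ⟨φ₀, ?_, ?_, ?_, ?_, ?_, ?_, ?_, ?_⟩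
  · simp [RaagEmbAux.φ₀, RaagEmbAux.f01]
  · simp [RaagEmbAux.φ₀, RaagEmbAux.f01]
  · simp [RaagEmbAux.φ₀, RaagEmbAux.f01]
  · simp [RaagEmbAux.φ₀, RaagEmbAux.f01]
  · simp [RaagEmbAux.φ₀, RaagEmbAux.f01]
  · simp [RaagEmbAux.φ₀, RaagEmbAux.f01]
  · simp [RaagEmbAux.φ₀, RaagEmbAux.f01]
  · -- injectivity via ψ ∘ φ = inl
    have comp_eq : (RaagEmbAux.ψ.comp RaagEmbAux.φ₀) =
        SemidirectProduct.inl (φ := RaagEmbAux.act) := by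
      refine PresentedGroup.ext fun x => ?_
      cases x <;>
        (refine SemidirectProduct.ext ?_ ?_ <;>
          simp [RaagEmbAux.ψ, RaagEmbAux.φ₀, RaagEmbAux.f01, RaagEmbAux.f1K,
            RaagEmbAux.α0_gen, RaagEmbAux.fα, SemidirectProduct.mul_left,
            SemidirectProduct.mul_right,
            (show (PresentedGroup.of : V0 → RAAG G0) = gen G0 from rfl)])
    intro x y hxy
    have h2 : RaagEmbAux.ψ (RaagEmbAux.φ₀ x) = RaagEmbAux.ψ (RaagEmbAux.φ₀ y) :=
      congrArg _ hxy
    rw [← MonoidHom.comp_apply, ← MonoidHom.comp_apply, comp_eq] at h2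
    exact SemidirectProduct.inl_injective h2
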